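/- Let U, X₁, …, Xₙ be finite random variables and let λ₁, …, λₙ ∈ [0,1] with Σᵢ λᵢ ≤ k for some integer k with 1 ≤ k ≤ n. Then Σᵢ λᵢ I(U; Xᵢ) − I(U; X₁⋯Xₙ) ≤ Σ_{S ⊆ [n], |S| = k} (Σ_{i ∈ S} H(Xᵢ) − H(X_S)). -/

import Mathlib

open Finset

variable {Ω : Type*}

/-- Marginal pmf of a random variable `X` under the pmf `p`. -/
noncomputable def marg [Fintype Ω] {α : Type*} [DecidableEq α]
    (p : Ω → ℝ) (X : Ω → α) (x : α) : ℝ :=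
  ∑ ω, if X ω = x then p ω else 0

/-- Shannon entropy of a finite random variable. -/
noncomputable def ent [Fintype Ω] {α : Type*} [Fintype α] [DecidableEq α]
    (p : Ω → ℝ) (X : Ω → α) : ℝ :=
  ∑ x, Real.negMulLog (marg p X x)

/-- Shannon mutual information. -/
noncomputable def mi [Fintype Ω] {α β : Type*} [Fintype α] [DecidableEq α]
    [Fintype β] [DecidableEq β] (p : Ω → ℝ) (X : Ω → α) (Y : Ω → β) : ℝ :=
  ent p X + ent p Y - ent p (fun ω => (X ω, Y ω))

section Aux

variable [Fintype Ω] {p : Ω → ℝ}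

lemma marg_nonneg (hp0 : ∀ ω, 0 ≤ p ω) {α : Type*} [DecidableEq α]
    (X : Ω → α) (x : α) : 0 ≤ marg p X x := by
  apply Finset.sum_nonneg
  intro ω _
  split <;> simp [hp0 ω]

lemma sum_marg_mul {α : Type*} [Fintype α] [DecidableEq α]
    (p : Ω → ℝ) (X : Ω → α) (f : α → ℝ) :
    ∑ x, marg p X x * f x = ∑ ω, p ω * f (X ω) := by
  unfold marg
  simp only [Finset.sum_mul, ite_mul, zero_mul]
  rw [Finset.sum_comm]
  apply Finset.sum_congr rfl
  intro ω _
  simp [Finset.sum_ite_eq]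

lemma sum_marg {α : Type*} [Fintype α] [DecidableEq α]
    (p : Ω → ℝ) (X : Ω → α) : ∑ x, marg p X x = ∑ ω, p ω := by
  have := sum_marg_mul p X (fun _ => 1)
  simpa using this

lemma le_marg (hp0 : ∀ ω, 0 ≤ p ω) {α : Type*} [DecidableEq α]
    (X : Ω → α) (ω : Ω) : p ω ≤ marg p X (X ω) := by
  unfold marg
  have h : p ω = ∑ ω' ∈ {ω}, (if X ω' = X ω then p ω' else 0) := by simp
  rw [h]
  apply Finset.sum_le_sum_of_subset_of_nonneg (by simp)
  intro ω' _ _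
  split <;> simp [hp0 ω']

lemma ent_eq {α : Type*} [Fintype α] [DecidableEq α] (p : Ω → ℝ) (X : Ω → α) :
    ent p X = -∑ ω, p ω * Real.log (marg p X (X ω)) := by
  unfold ent
  rw [← sum_marg_mul p X (fun x => Real.log (marg p X x)), ← Finset.sum_neg_distrib]
  apply Finset.sum_congr rfl
  intro x _
  simp only [Real.negMulLog]
  ring

lemma marg_pos (hp0 : ∀ ω, 0 ≤ p ω) {α : Type*} [DecidableEq α]
    (X : Ω → α) {ω : Ω} (hω : p ω ≠ 0) : 0 < marg p X (X ω) :=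
  lt_of_lt_of_le (lt_of_le_of_ne (hp0 ω) (Ne.symm hω)) (le_marg hp0 X ω)

/-- Pointwise Gibbs inequality. -/
lemma mul_log_sub_le {a b : ℝ} (ha : 0 ≤ a) (hb : 0 ≤ b) (h : a ≠ 0 → b ≠ 0) :
    a * (Real.log b - Real.log a) ≤ b - a := by
  rcases eq_or_lt_of_le ha with h0 | ha
  · simp [← h0, hb]
  · have hb' : 0 < b := lt_of_le_of_ne hb (Ne.symm (h (ne_of_gt ha)))
    have hlog : Real.log (b / a) ≤ b / a - 1 := Real.log_le_sub_one_of_pos (by positivity)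
    rw [Real.log_div (ne_of_gt hb') (ne_of_gt ha)] at hlog
    calc a * (Real.log b - Real.log a) ≤ a * (b / a - 1) :=
          mul_le_mul_of_nonneg_left hlog (le_of_lt ha)
      _ = b - a := by field_simp

/-- Gibbs inequality: entropy is at most cross-entropy with any sub-pmf `b`. -/
lemma ent_le (hp0 : ∀ ω, 0 ≤ p ω) (hp1 : ∑ ω, p ω = 1)
    {α : Type*} [Fintype α] [DecidableEq α] (X : Ω → α) (b : α → ℝ)
    (hb0 : ∀ x, 0 ≤ b x) (hb1 : ∑ x, b x ≤ 1)
    (hbpos : ∀ ω, p ω ≠ 0 → b (X ω) ≠ 0) :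
    ent p X ≤ -∑ ω, p ω * Real.log (b (X ω)) := by
  rw [ent_eq, ← sum_marg_mul p X (fun x => Real.log (b x)),
    ← sum_marg_mul p X (fun x => Real.log (marg p X x))]
  have key : ∑ x, marg p X x * (Real.log (b x) - Real.log (marg p X x)) ≤ 0 := by
    calc ∑ x, marg p X x * (Real.log (b x) - Real.log (marg p X x))
        ≤ ∑ x, (b x - marg p X x) := by
          apply Finset.sum_le_sum
          intro x _
          apply mul_log_sub_le (marg_nonneg hp0 X x) (hb0 x)
          intro hm
          obtain ⟨ω, _, hω⟩ := Finset.exists_ne_zero_of_sum_ne_zero hm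
          have hpω : p ω ≠ 0 := by
            intro h0; apply hω; simp [h0]
          have hXω : X ω = x := by
            by_contra h; apply hω; simp [h]
          rw [← hXω]
          exact hbpos ω hpω
      _ ≤ 0 := by
          rw [Finset.sum_sub_distrib, sum_marg, hp1]
          linarith
  have expand : ∑ x, marg p X x * (Real.log (b x) - Real.log (marg p X x))
      = ∑ x, marg p X x * Real.log (b x) - ∑ x, marg p X x * Real.log (marg p X x) := by
    rw [← Finset.sum_sub_distrib]; apply Finset.sum_congr rfl; intros; ring
  rw [expand] at key
  linarith

/-- Subadditivity of entropy for a tuple of random variables. -/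
lemma ent_tuple_le (hp0 : ∀ ω, 0 ≤ p ω) (hp1 : ∑ ω, p ω = 1)
    {ι α : Type*} [Fintype ι] [DecidableEq ι] [Fintype α] [DecidableEq α]
    (Z : ι → Ω → α) :
    ent p (fun ω i => Z i ω) ≤ ∑ i, ent p (Z i) := by
  set b : (ι → α) → ℝ := fun v => ∏ i, marg p (Z i) (v i) with hb
  have h := ent_le hp0 hp1 (fun ω i => Z i ω) b
    (fun v => Finset.prod_nonneg fun i _ => marg_nonneg hp0 (Z i) (v i))
    (by rw [hb]; simp only; rw [← Fintype.prod_sum]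
        rw [Finset.prod_congr rfl (fun i _ => sum_marg p (Z i)), hp1]; simp)
    (fun ω hω => ne_of_gt (Finset.prod_pos fun i _ => marg_pos hp0 (Z i) hω))
  refine le_trans h ?_
  have : ∀ ω, p ω * Real.log (b (fun i => Z i ω))
      = p ω * ∑ i, Real.log (marg p (Z i) (Z i ω)) := by
    intro ω
    by_cases hω : p ω = 0
    · simp [hω]
    · congr 1
      rw [hb]
      exact Real.log_prod (fun i _ => ne_of_gt (marg_pos hp0 (Z i) hω))
  rw [Finset.sum_congr rfl (fun ω _ => this ω)]
  have : ∑ ω, p ω * ∑ i, Real.log (marg p (Z i) (Z i ω))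
      = ∑ i, ∑ ω, p ω * Real.log (marg p (Z i) (Z i ω)) := by
    simp only [Finset.mul_sum]
    rw [Finset.sum_comm]
  rw [this, ← Finset.sum_neg_distrib]
  apply Finset.sum_le_sum
  intro i _
  rw [ent_eq]

lemma marg_pair_fst {α υ : Type*} [Fintype α] [DecidableEq α] [DecidableEq υ]
    (U : Ω → υ) (Z : Ω → α) (u : υ) :
    ∑ x, marg p (fun ω => (U ω, Z ω)) (u, x) = marg p U u := by
  unfold marg
  rw [Finset.sum_comm]
  apply Finset.sum_congr rfl
  intro ω _
  simp only [Prod.mk.injEq]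
  by_cases h : U ω = u
  · simp [h, Finset.sum_ite_eq]
  · simp [h]

lemma marg_pair_snd {α υ : Type*} [DecidableEq α] [Fintype υ] [DecidableEq υ]
    (U : Ω → υ) (Z : Ω → α) (x : α) :
    ∑ u, marg p (fun ω => (U ω, Z ω)) (u, x) = marg p Z x := by
  unfold marg
  rw [Finset.sum_comm]
  apply Finset.sum_congr rfl
  intro ω _
  simp only [Prod.mk.injEq]
  by_cases h : Z ω = x
  · simp [h, Finset.sum_ite_eq]
  · simp [h]

lemma marg_le_comp (hp0 : ∀ ω, 0 ≤ p ω) {α β : Type*} [DecidableEq α] [DecidableEq β]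
    (W : Ω → α) (f : α → β) (a : α) :
    marg p W a ≤ marg p (fun ω => f (W ω)) (f a) := by
  unfold marg
  apply Finset.sum_le_sum
  intro ω _
  by_cases h : W ω = a
  · simp [h]
  · simp only [h, if_false]
    split <;> simp [hp0 ω]

/-- Nonnegativity of mutual information (pair subadditivity). -/
lemma mi_nonneg (hp0 : ∀ ω, 0 ≤ p ω) (hp1 : ∑ ω, p ω = 1)
    {α υ : Type*} [Fintype α] [DecidableEq α] [Fintype υ] [DecidableEq υ]
    (U : Ω → υ) (Z : Ω → α) : 0 ≤ mi p U Z := by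
  have h := ent_le hp0 hp1 (fun ω => (U ω, Z ω)) (fun y => marg p U y.1 * marg p Z y.2)
    (fun y => mul_nonneg (marg_nonneg hp0 _ _) (marg_nonneg hp0 _ _))
    (by rw [Fintype.sum_prod_type]
        simp only [← Finset.mul_sum]
        rw [← Finset.sum_mul, sum_marg, sum_marg, hp1]; simp)
    (fun ω hω => ne_of_gt (mul_pos (marg_pos hp0 U hω) (marg_pos hp0 Z hω)))
  simp only [mi]
  have e : ∑ ω, p ω * Real.log (marg p U (U ω) * marg p Z (Z ω))
      = ∑ ω, (p ω * Real.log (marg p U (U ω)) + p ω * Real.log (marg p Z (Z ω))) := by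
    apply Finset.sum_congr rfl
    intro ω _
    by_cases hω : p ω = 0
    · simp [hω]
    · rw [Real.log_mul (ne_of_gt (marg_pos hp0 U hω)) (ne_of_gt (marg_pos hp0 Z hω))]
      ring
  rw [e, Finset.sum_add_distrib] at h
  rw [ent_eq p U, ent_eq p Z, ent_eq p (fun ω => (U ω, Z ω))]
  have h2 := h
  rw [ent_eq p (fun ω => (U ω, Z ω))] at h2
  linarith

/-- Conditional subadditivity for a tuple. -/
lemma cond_tuple (hp0 : ∀ ω, 0 ≤ p ω) (hp1 : ∑ ω, p ω = 1)
    {ι α υ : Type*} [Fintype ι] [DecidableEq ι] [Fintype α] [DecidableEq α]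
    [Fintype υ] [DecidableEq υ] (hι : 1 ≤ Fintype.card ι)
    (U : Ω → υ) (Z : ι → Ω → α) :
    ent p (fun ω => (U ω, fun i => Z i ω)) + ((Fintype.card ι : ℝ) - 1) * ent p U
      ≤ ∑ i, ent p (fun ω => (U ω, Z i ω)) := by
  classical
  set c := Fintype.card ι with hc
  set b : υ × (ι → α) → ℝ := fun y =>
    (∏ i, marg p (fun ω => (U ω, Z i ω)) (y.1, y.2 i)) / (marg p U y.1) ^ (c - 1) with hbdef
  have hb0 : ∀ y, 0 ≤ b y := fun y => div_nonneg
    (Finset.prod_nonneg fun i _ => marg_nonneg hp0 _ _)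
    (pow_nonneg (marg_nonneg hp0 _ _) _)
  have hsucc : c - 1 + 1 = c := Nat.succ_pred_eq_of_pos hι
  have hb1 : ∑ y, b y ≤ 1 := by
    rw [Fintype.sum_prod_type]
    have hu : ∀ u : υ, ∑ v : ι → α, b (u, v) ≤ marg p U u := by
      intro u
      have hnum : ∑ v : ι → α, ∏ i, marg p (fun ω => (U ω, Z i ω)) (u, v i)
          = (marg p U u) ^ c := by
        rw [← Fintype.prod_sum (fun i x => marg p (fun ω => (U ω, Z i ω)) (u, x))]
        rw [Finset.prod_congr rfl (fun i _ => marg_pair_fst U (Z i) u)]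
        simp [Finset.prod_const, hc]
      have : ∑ v : ι → α, b (u, v)
          = (∑ v : ι → α, ∏ i, marg p (fun ω => (U ω, Z i ω)) (u, v i))
            / (marg p U u) ^ (c - 1) := by
        simp only [hbdef]
        rw [Finset.sum_div]
      rw [this, hnum]
      by_cases hm : marg p U u = 0
      · rw [hm, zero_pow (by omega)]
        simp
      · have h1 : marg p U u ^ c = marg p U u ^ (c-1) * marg p U u := by
          conv_lhs => rw [← hsucc, pow_succ]
        rw [h1, mul_comm, mul_div_assoc, div_self (pow_ne_zero _ hm), mul_one]
    calc ∑ u, ∑ v : ι → α, b (u, v) ≤ ∑ u, marg p U u :=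
          Finset.sum_le_sum fun u _ => hu u
      _ = 1 := by rw [sum_marg, hp1]
  have hbpos : ∀ ω, p ω ≠ 0 → (0:ℝ) < b (U ω, fun i => Z i ω) := by
    intro ω hω
    apply div_pos
    · exact Finset.prod_pos fun i _ => marg_pos hp0 (fun ω' => (U ω', Z i ω')) hω
    · exact pow_pos (marg_pos hp0 U hω) _
  have h : ent p (fun ω => (U ω, fun i => Z i ω))
      ≤ -∑ ω, p ω * Real.log (b (U ω, fun i => Z i ω)) :=
    ent_le hp0 hp1 _ b hb0 hb1 (fun ω hω => ne_of_gt (hbpos ω hω))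
  have hsum_eq : ∑ ω, p ω * Real.log (b (U ω, fun i => Z i ω))
      = (∑ i, ∑ ω, p ω * Real.log (marg p (fun ω' => (U ω', Z i ω')) (U ω, Z i ω)))
        - ((c:ℝ) - 1) * ∑ ω, p ω * Real.log (marg p U (U ω)) := by
    have step : ∀ ω, p ω * Real.log (b (U ω, fun i => Z i ω))
        = (∑ i, p ω * Real.log (marg p (fun ω' => (U ω', Z i ω')) (U ω, Z i ω)))
          - ((c:ℝ) - 1) * (p ω * Real.log (marg p U (U ω))) := by
      intro ω
      by_cases hω : p ω = 0
      · simp [hω]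
      · simp only [hbdef]
        rw [Real.log_div
            (ne_of_gt (Finset.prod_pos fun i _ => marg_pos hp0 (fun ω' => (U ω', Z i ω')) hω))
            (pow_ne_zero _ (ne_of_gt (marg_pos hp0 U hω))),
          Real.log_prod (fun i _ => ne_of_gt (marg_pos hp0 (fun ω' => (U ω', Z i ω')) hω)),
          Real.log_pow]
        rw [Nat.cast_sub hι]
        push_cast
        rw [mul_sub, Finset.mul_sum]
        ring
    rw [Finset.sum_congr rfl (fun ω _ => step ω), Finset.sum_sub_distrib, Finset.sum_comm,
      Finset.mul_sum]
  have eU : ent p U = -∑ ω, p ω * Real.log (marg p U (U ω)) := ent_eq p U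
  have ei : ∀ i, ent p (fun ω => (U ω, Z i ω))
      = -∑ ω, p ω * Real.log (marg p (fun ω' => (U ω', Z i ω')) (U ω, Z i ω)) :=
    fun i => ent_eq p _
  rw [hsum_eq] at h
  rw [eU, Finset.sum_congr rfl (fun i _ => ei i), Finset.sum_neg_distrib]
  linarith

/-- Data processing: `H(U,W) + H(f∘W) ≤ H(U,f∘W) + H(W)`. -/
lemma data_proc (hp0 : ∀ ω, 0 ≤ p ω) (hp1 : ∑ ω, p ω = 1)
    {α β υ : Type*} [Fintype α] [DecidableEq α] [Fintype β] [DecidableEq β]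
    [Fintype υ] [DecidableEq υ] (U : Ω → υ) (W : Ω → α) (f : α → β) :
    ent p (fun ω => (U ω, W ω)) + ent p (fun ω => f (W ω))
      ≤ ent p (fun ω => (U ω, f (W ω))) + ent p W := by
  classical
  set b : υ × α → ℝ := fun y =>
    marg p (fun ω => (U ω, f (W ω))) (y.1, f y.2) * marg p W y.2
      / marg p (fun ω => f (W ω)) (f y.2) with hbdef
  have hb0 : ∀ y, 0 ≤ b y := fun y => div_nonneg
    (mul_nonneg (marg_nonneg hp0 _ _) (marg_nonneg hp0 _ _)) (marg_nonneg hp0 _ _)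
  have hb1 : ∑ y, b y ≤ 1 := by
    rw [Fintype.sum_prod_type_right]
    have ha : ∀ a : α, ∑ u, b (u, a) ≤ marg p W a := by
      intro a
      have : ∑ u, b (u, a)
          = (∑ u, marg p (fun ω => (U ω, f (W ω))) (u, f a)) * marg p W a
            / marg p (fun ω => f (W ω)) (f a) := by
        simp only [hbdef]
        rw [← Finset.sum_div, ← Finset.sum_mul]
      rw [this, marg_pair_snd U (fun ω => f (W ω)) (f a)]
      by_cases hm : marg p (fun ω => f (W ω)) (f a) = 0
      · rw [hm]
        simp [marg_nonneg hp0 W a]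
      · rw [mul_comm, mul_div_assoc, div_self hm, mul_one]
    calc ∑ a, ∑ u, b (u, a) ≤ ∑ a, marg p W a := Finset.sum_le_sum fun a _ => ha a
      _ = 1 := by rw [sum_marg, hp1]
  have hbpos : ∀ ω, p ω ≠ 0 → (0:ℝ) < b (U ω, W ω) := by
    intro ω hω
    apply div_pos
    · exact mul_pos (marg_pos hp0 (fun ω' => (U ω', f (W ω'))) hω) (marg_pos hp0 W hω)
    · exact marg_pos hp0 (fun ω' => f (W ω')) hω
  have h : ent p (fun ω => (U ω, W ω)) ≤ -∑ ω, p ω * Real.log (b (U ω, W ω)) :=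
    ent_le hp0 hp1 _ b hb0 hb1 (fun ω hω => ne_of_gt (hbpos ω hω))
  have hsum_eq : ∑ ω, p ω * Real.log (b (U ω, W ω))
      = (∑ ω, p ω * Real.log (marg p (fun ω' => (U ω', f (W ω'))) (U ω, f (W ω))))
        + (∑ ω, p ω * Real.log (marg p W (W ω)))
        - ∑ ω, p ω * Real.log (marg p (fun ω' => f (W ω')) (f (W ω))) := by
    have step : ∀ ω, p ω * Real.log (b (U ω, W ω))
        = p ω * Real.log (marg p (fun ω' => (U ω', f (W ω'))) (U ω, f (W ω)))
          + p ω * Real.log (marg p W (W ω))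
          - p ω * Real.log (marg p (fun ω' => f (W ω')) (f (W ω))) := by
      intro ω
      by_cases hω : p ω = 0
      · simp [hω]
      · simp only [hbdef]
        rw [Real.log_div
            (ne_of_gt (mul_pos (marg_pos hp0 (fun ω' => (U ω', f (W ω'))) hω)
              (marg_pos hp0 W hω)))
            (ne_of_gt (marg_pos hp0 (fun ω' => f (W ω')) hω)),
          Real.log_mul (ne_of_gt (marg_pos hp0 (fun ω' => (U ω', f (W ω'))) hω))
            (ne_of_gt (marg_pos hp0 W hω))]
        ring
    rw [Finset.sum_congr rfl (fun ω _ => step ω), Finset.sum_sub_distrib,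
      Finset.sum_add_distrib]
  rw [hsum_eq] at h
  have e1 : ent p (fun ω => (U ω, f (W ω)))
      = -∑ ω, p ω * Real.log (marg p (fun ω' => (U ω', f (W ω'))) (U ω, f (W ω))) :=
    ent_eq p _
  have e2 : ent p W = -∑ ω, p ω * Real.log (marg p W (W ω)) := ent_eq p W
  have e3 : ent p (fun ω => f (W ω))
      = -∑ ω, p ω * Real.log (marg p (fun ω' => f (W ω')) (f (W ω))) := ent_eq p _
  rw [e1, e2, e3]
  linarith

end Aux

/-- Combinatorial selection lemma. -/
lemma exists_good_subset {n k : ℕ} (hk1 : 1 ≤ k) (hkn : k ≤ n)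
    (g lam : Fin n → ℝ) (hg : ∀ i, 0 ≤ g i)
    (hl : ∀ i, lam i ∈ Set.Icc (0 : ℝ) 1) (hsum : ∑ i, lam i ≤ (k : ℝ)) :
    ∃ S : Finset (Fin n), S.card = k ∧ ∑ i, lam i * g i ≤ ∑ i ∈ S, g i := by
  classical
  have hne : ((Finset.univ : Finset (Fin n)).powersetCard k).Nonempty := by
    rw [Finset.powersetCard_nonempty]
    simpa using hkn
  obtain ⟨S, hSmem, hSmax⟩ := Finset.exists_max_image _ (fun T => ∑ i ∈ T, g i) hne
  have hScard : S.card = k := (Finset.mem_powersetCard.1 hSmem).2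
  have key : ∀ j ∉ S, ∀ i ∈ S, g j ≤ g i := by
    intro j hj i hi
    by_contra hlt
    push_neg at hlt
    have hj' : j ∉ S.erase i := fun h => hj (Finset.mem_of_mem_erase h)
    have hcard : (insert j (S.erase i)).card = k := by
      rw [Finset.card_insert_of_notMem hj', Finset.card_erase_of_mem hi, hScard]
      omega
    have hmem' : insert j (S.erase i) ∈ (Finset.univ : Finset (Fin n)).powersetCard k :=
      Finset.mem_powersetCard.2 ⟨Finset.subset_univ _, hcard⟩
    have hmax := hSmax _ hmem'
    rw [Finset.sum_insert hj'] at hmax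
    have hS : ∑ i' ∈ S, g i' = g i + ∑ i' ∈ S.erase i, g i' :=
      (Finset.add_sum_erase _ _ hi).symm
    linarith
  have hSne : S.Nonempty := Finset.card_pos.1 (by omega)
  obtain ⟨i0, hi0, hmin⟩ := Finset.exists_min_image S g hSne
  have m0 : 0 ≤ g i0 := hg i0
  have split : ∑ i ∈ S, lam i * g i + ∑ i ∈ Sᶜ, lam i * g i = ∑ i, lam i * g i :=
    Finset.sum_add_sum_compl S _
  have h1 : ∑ i ∈ Sᶜ, lam i * g i ≤ (∑ i ∈ Sᶜ, lam i) * g i0 := by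
    rw [Finset.sum_mul]
    apply Finset.sum_le_sum
    intro i hiC
    have hiS : i ∉ S := Finset.mem_compl.1 hiC
    exact mul_le_mul_of_nonneg_left (key i hiS i0 hi0) ((hl i).1)
  have h2 : ∑ i ∈ Sᶜ, lam i ≤ (k:ℝ) - ∑ i ∈ S, lam i := by
    have := Finset.sum_add_sum_compl S lam
    linarith
  have h3 : ((k:ℝ) - ∑ i ∈ S, lam i) = ∑ i ∈ S, (1 - lam i) := by
    rw [Finset.sum_sub_distrib, Finset.sum_const, hScard]
    simp
  have h4 : (∑ i ∈ S, (1 - lam i)) * g i0 ≤ ∑ i ∈ S, (1 - lam i) * g i := by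
    rw [Finset.sum_mul]
    apply Finset.sum_le_sum
    intro i hi
    exact mul_le_mul_of_nonneg_left (hmin i hi) (by linarith [(hl i).2])
  have h5 : ∑ i ∈ S, lam i * g i + ∑ i ∈ S, (1 - lam i) * g i = ∑ i ∈ S, g i := by
    rw [← Finset.sum_add_distrib]
    apply Finset.sum_congr rfl
    intros
    ring
  refine ⟨S, hScard, ?_⟩
  have hchain : (∑ i ∈ Sᶜ, lam i) * g i0 ≤ (∑ i ∈ S, (1 - lam i)) * g i0 := by
    apply mul_le_mul_of_nonneg_right _ m0
    linarith
  linarith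

theorem hc_kwise_bound [Fintype Ω] {α υ : Type*} [Fintype α] [DecidableEq α]
    [Fintype υ] [DecidableEq υ]
    (p : Ω → ℝ) (hp0 : ∀ ω, 0 ≤ p ω) (hp1 : ∑ ω, p ω = 1)
    (n k : ℕ) (hk1 : 1 ≤ k) (hkn : k ≤ n)
    (U : Ω → υ) (X : Fin n → Ω → α)
    (lam : Fin n → ℝ) (hl : ∀ i, lam i ∈ Set.Icc (0 : ℝ) 1)
    (hsum : ∑ i, lam i ≤ (k : ℝ)) :
    ∑ i, lam i * mi p U (X i) - mi p U (fun ω i => X i ω)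
      ≤ ∑ S ∈ Finset.univ.powersetCard k,
          ((∑ i ∈ S, ent p (X i)) - ent p (fun ω (i : ↥S) => X i ω)) := by
  classical
  obtain ⟨S, hScard, hSle⟩ := exists_good_subset hk1 hkn (fun i => mi p U (X i)) lam
    (fun i => mi_nonneg hp0 hp1 U (X i)) hl hsum
  have hmem : S ∈ (Finset.univ : Finset (Fin n)).powersetCard k :=
    Finset.mem_powersetCard.2 ⟨Finset.subset_univ S, hScard⟩
  have hcardS : Fintype.card ↥S = k := by rw [Fintype.card_coe, hScard]
  have hterm : ∀ T ∈ (Finset.univ : Finset (Fin n)).powersetCard k,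
      0 ≤ (∑ i ∈ T, ent p (X i)) - ent p (fun ω (i : ↥T) => X i ω) := by
    intro T _
    have h := ent_tuple_le hp0 hp1 (fun (i : ↥T) => X ↑i)
    have hs : ∑ i : ↥T, ent p (X ↑i) = ∑ i ∈ T, ent p (X i) :=
      Finset.sum_coe_sort T (fun i => ent p (X i))
    rw [hs] at h
    linarith
  have hsingle := Finset.single_le_sum hterm hmem
  have hdp : mi p U (fun ω (i : ↥S) => X ↑i ω) ≤ mi p U (fun ω i => X i ω) := by
    have h := data_proc hp0 hp1 U (fun ω i => X i ω) (fun w (i : ↥S) => w ↑i)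
    simp only [mi]
    linarith
  have hct := cond_tuple hp0 hp1 (by rw [hcardS]; exact hk1) U (fun (i : ↥S) => X ↑i)
  rw [hcardS] at hct
  have hsum1 : ∑ i : ↥S, ent p (fun ω => (U ω, X ↑i ω))
      = ∑ i ∈ S, ent p (fun ω => (U ω, X i ω)) :=
    Finset.sum_coe_sort S (fun i => ent p (fun ω => (U ω, X i ω)))
  rw [hsum1] at hct
  have e1 : ∑ i ∈ S, mi p U (X i)
      = (k:ℝ) * ent p U + ∑ i ∈ S, ent p (X i)
        - ∑ i ∈ S, ent p (fun ω => (U ω, X i ω)) := by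
    simp only [mi]
    rw [Finset.sum_sub_distrib, Finset.sum_add_distrib, Finset.sum_const, hScard,
      nsmul_eq_mul]
  have e2 : mi p U (fun ω (i : ↥S) => X ↑i ω)
      = ent p U + ent p (fun ω (i : ↥S) => X ↑i ω)
        - ent p (fun ω => (U ω, fun (i : ↥S) => X ↑i ω)) := rfl
  have hknn : (1:ℝ) ≤ (k:ℝ) := by exact_mod_cast hk1
  -- chain everything together
  have step1 : ∑ i, lam i * mi p U (X i) - mi p U (fun ω i => X i ω)
      ≤ ∑ i ∈ S, mi p U (X i) - mi p U (fun ω (i : ↥S) => X ↑i ω) := by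
    linarith
  have step2 : ∑ i ∈ S, mi p U (X i) - mi p U (fun ω (i : ↥S) => X ↑i ω)
      ≤ (∑ i ∈ S, ent p (X i)) - ent p (fun ω (i : ↥S) => X ↑i ω) := by
    rw [e1, e2]
    linarith
  calc ∑ i, lam i * mi p U (X i) - mi p U (fun ω i => X i ω)
      ≤ (∑ i ∈ S, ent p (X i)) - ent p (fun ω (i : ↥S) => X ↑i ω) := le_trans step1 step2
    _ ≤ ∑ T ∈ Finset.univ.powersetCard k,
          ((∑ i ∈ T, ent p (X i)) - ent p (fun ω (i : ↥T) => X i ω)) := hsingle
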